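/- Suppose α_cs/α_ls < min{1, β_cs/β_ls}. Then 𝒩₁(Θ) > 𝒩₂(Θ) for all Θ > 0, where 𝒩ᵢ(Θ) = Θ/ρ + Θηᵢ/(ρ(1+ξᵢΘ)). -/

import Mathlib

private lemma stmt14_key (η₁ η₂ ξ₁ ξ₂ ρ Θ : ℝ) (hρ : 0 < ρ) (hΘ : 0 < Θ)
    (hξ₁ : 0 < ξ₁) (hξ₂ : 0 < ξ₂) (hη₂ : 0 ≤ η₂)
    (hη : η₂ < η₁) (hx : η₂ * ξ₁ < η₁ * ξ₂) :
    Θ / ρ + Θ * η₂ / (ρ * (1 + ξ₂ * Θ)) < Θ / ρ + Θ * η₁ / (ρ * (1 + ξ₁ * Θ)) := by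
  have h1 : 0 < 1 + ξ₁ * Θ := by positivity
  have h2 : 0 < 1 + ξ₂ * Θ := by positivity
  have : Θ * η₂ / (ρ * (1 + ξ₂ * Θ)) < Θ * η₁ / (ρ * (1 + ξ₁ * Θ)) := by
    rw [div_lt_div_iff₀ (by positivity) (by positivity)]
    nlinarith [mul_pos hΘ (mul_pos hρ hΘ), mul_pos hρ hΘ]
  linarith

theorem stmt14_N1_gt_N2
    (asa aas aal alc als acs bls bcs ρ : ℝ)
    (hasa : 0 < asa) (haas : 0 < aas) (haal : 0 < aal) (halc : 0 < alc)
    (hals : 0 < als) (hacs : 0 < acs) (hbls : 0 < bls) (hbcs : 0 < bcs)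
    (hρ : 0 < ρ) (hρ1 : ρ < 1)
    (hcond : acs / als < min 1 (bcs / bls)) :
    let η₁ := 1 / ((asa / (aas + aal)) * (1 + aal / als))
    let ξ₁ := (aal * bls / (als * (aas + aal))) * (1 / ((asa / (aas + aal)) * (1 + aal / als)))
    let D := 1 + aal / (als + alc) + aal * alc / ((als + alc) * acs)
    let η₂ := (aas + aal) / (asa * D)
    let ξ₂ := (bls * aal / (alc + als) + bcs * aal * alc / (acs * (alc + als))) / (asa * D)
    let N₁ := fun Θ : ℝ => Θ / ρ + Θ * η₁ / (ρ * (1 + ξ₁ * Θ))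
    let N₂ := fun Θ : ℝ => Θ / ρ + Θ * η₂ / (ρ * (1 + ξ₂ * Θ))
    ∀ Θ : ℝ, 0 < Θ → N₂ Θ < N₁ Θ := by
  have hlt1 : acs < als := by
    have := lt_of_lt_of_le hcond (min_le_left _ _)
    rwa [div_lt_one hals] at this
  have hlt2 : acs * bls < als * bcs := by
    have := lt_of_lt_of_le hcond (min_le_right _ _)
    rw [div_lt_div_iff₀ hals hbls] at this
    linarith
  have hsum : 0 < aas + aal := by linarith
  have hD : 0 < 1 + aal / (als + alc) + aal * alc / ((als + alc) * acs) := by positivity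
  dsimp only
  intro Θ hΘ
  apply stmt14_key
  · exact hρ
  · exact hΘ
  · positivity
  · positivity
  · positivity
  · -- η₂ < η₁
    rw [show (1:ℝ) / ((asa / (aas + aal)) * (1 + aal / als)) =
        (aas + aal) / (asa * (1 + aal / als)) from by
      rw [div_mul_eq_mul_div, one_div_div]]
    apply div_lt_div_of_pos_left hsum (by positivity)
    have hkey : 1 + aal / als < 1 + aal / (als + alc) + aal * alc / ((als + alc) * acs) := by
      have h : aal / (als + alc) + aal * alc / ((als + alc) * acs) - aal / als
          = aal * alc * (als - acs) / ((als + alc) * acs * als) := by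
        field_simp
        ring
      have hp : 0 < aal * alc * (als - acs) / ((als + alc) * acs * als) := by
        have : 0 < als - acs := by linarith
        positivity
      linarith [h ▸ hp]
    nlinarith [mul_pos hasa (sub_pos.mpr hkey)]
  · -- η₂ * ξ₁ < η₁ * ξ₂
    set η₁ := 1 / ((asa / (aas + aal)) * (1 + aal / als)) with hη₁
    set η₂ := (aas + aal) / (asa * (1 + aal / (als + alc) + aal * alc / ((als + alc) * acs))) with hη₂
    set B := bls * aal / (alc + als) + bcs * aal * alc / (acs * (alc + als)) with hB
    have hη₁p : 0 < η₁ := by rw [hη₁]; positivity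
    have hη₂p : 0 < η₂ := by rw [hη₂]; positivity
    have hstep : aal * bls / (als * (aas + aal)) < B / (aas + aal) := by
      rw [div_lt_div_iff₀ (by positivity) hsum, hB,
        show bls * aal / (alc + als) + bcs * aal * alc / (acs * (alc + als))
            = (bls * aal * acs + bcs * aal * alc) / (acs * (alc + als)) from by
          field_simp,
        div_mul_eq_mul_div, lt_div_iff₀ (by positivity)]
      nlinarith [mul_pos (mul_pos haal halc) (sub_pos.mpr hlt2), mul_pos hsum (mul_pos haal halc)]
    have hrw : B / (asa * (1 + aal / (als + alc) + aal * alc / ((als + alc) * acs)))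
        = B / (aas + aal) * η₂ := by
      rw [hη₂, div_mul_div_comm, mul_comm B (aas + aal), mul_div_mul_left _ _ hsum.ne']
    calc η₂ * (aal * bls / (als * (aas + aal)) * η₁)
        = (η₁ * η₂) * (aal * bls / (als * (aas + aal))) := by ring
      _ < (η₁ * η₂) * (B / (aas + aal)) := by
          exact mul_lt_mul_of_pos_left hstep (by positivity)
      _ = η₁ * (B / (aas + aal) * η₂) := by ring
      _ = η₁ * (B / (asa * (1 + aal / (als + alc) + aal * alc / ((als + alc) * acs)))) := by
          rw [hrw]
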